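/- Let C > 0 and λ > 0 be constants, μ ∈ (0,1), and a_n = 1/(n+1)^μ for n ≥ 0. For integers n > n₀ ≥ 0 let β_n = max_{n₀ ≤ k ≤ n−1} [ exp(−λ Σ_{i=k+1}^{n−1} a_i) · a_k ]. Then, as n₀ → ∞, Σ_{n=n₀+1}^{∞} exp(−C/β_n) = O( n₀^{1−μ} exp(−C (n₀−1)^μ) ). -/

import Mathlib

open Filter Asymptotics



/-- Concavity bound: for `0 ≤ μ ≤ 1`, `0 ≤ y ≤ x`, `0 < x`:
`y^μ ≤ x^μ + μ x^(μ-1) (y - x)`. -/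
lemma stmt8_bern {mu : ℝ} (hmu0 : 0 ≤ mu) (hmu1 : mu ≤ 1) {x y : ℝ}
    (hy : 0 ≤ y) (hx : 0 < x) (hxy : y ≤ x) :
    y ^ mu ≤ x ^ mu + mu * x ^ (mu - 1) * (y - x) := by
  have hs : (-1 : ℝ) ≤ y / x - 1 := by
    have : 0 ≤ y / x := div_nonneg hy hx.le
    linarith
  have h := rpow_one_add_le_one_add_mul_self hs hmu0 hmu1
  rw [add_sub_cancel] at h
  have hdiv : (y / x) ^ mu = y ^ mu / x ^ mu := Real.div_rpow hy hx.le mu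
  rw [hdiv] at h
  have hxmu : 0 < x ^ mu := Real.rpow_pos_of_pos hx mu
  have h2 : y ^ mu ≤ (1 + mu * (y / x - 1)) * x ^ mu := by
    rw [div_le_iff₀ hxmu] at h; linarith [h]
  have h3 : (1 + mu * (y / x - 1)) * x ^ mu
      = x ^ mu + mu * x ^ (mu - 1) * (y - x) := by
    rw [Real.rpow_sub_one hx.ne']
    field_simp
  linarith [h2, h3.symm.le]

/-- Gap bound: `μ (n+j)^(μ-1) j ≤ (n+j)^μ - n^μ`. -/
lemma stmt8_gap {mu : ℝ} (hmu0 : 0 ≤ mu) (hmu1 : mu ≤ 1) {n j : ℝ}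
    (hn : 0 ≤ n) (hj : 0 < j) :
    n ^ mu + mu * (n + j) ^ (mu - 1) * j ≤ (n + j) ^ mu := by
  have := stmt8_bern hmu0 hmu1 hn (by linarith) (by linarith : n ≤ n + j)
  have h : n - (n + j) = -j := by ring
  rw [h] at this
  nlinarith [this]

lemma stmt8_summable {c mu : ℝ} (hc : 0 < c) (hmu : 0 < mu) :
    Summable fun m : ℕ => Real.exp (-(c * ((m : ℝ) + 1) ^ mu)) := by
  have hg : Summable fun m : ℕ => ((m : ℝ) + 1) ^ (-2 : ℝ) := by
    have h1 : Summable (fun n : ℕ => (n : ℝ) ^ (-2 : ℝ)) :=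
      Real.summable_nat_rpow.mpr (by norm_num)
    have h2 := h1.comp_injective Nat.succ_injective
    refine h2.congr fun m => ?_
    simp [Function.comp, Nat.succ_eq_add_one]
  apply summable_of_isBigO_nat hg
  apply IsBigO.of_bound 1
  have hlog : ∀ᶠ x : ℝ in atTop, ‖Real.log x‖ ≤ c / 2 * ‖x ^ mu‖ :=
    (isLittleO_log_rpow_atTop hmu).bound (by positivity)
  have htend : Tendsto (fun m : ℕ => (m : ℝ) + 1) atTop atTop :=
    tendsto_atTop_add_const_right _ _ tendsto_natCast_atTop_atTop
  filter_upwards [htend.eventually hlog, Filter.eventually_atTop.mpr ⟨1, fun m hm => hm⟩]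
    with m hm _
  set x : ℝ := (m : ℝ) + 1 with hx
  have hx1 : (1 : ℝ) ≤ x := by
    rw [hx]; linarith [Nat.cast_nonneg (α := ℝ) m]
  have hx0 : (0 : ℝ) < x := by linarith
  have hlogx : Real.log x ≤ c / 2 * x ^ mu := by
    have h1 : ‖Real.log x‖ = Real.log x := Real.norm_of_nonneg (Real.log_nonneg hx1)
    have h2 : ‖x ^ mu‖ = x ^ mu := Real.norm_of_nonneg (Real.rpow_nonneg hx0.le mu)
    rw [h1, h2] at hm; exact hm
  have hkey : Real.exp (-(c * x ^ mu)) ≤ x ^ (-2 : ℝ) := by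
    rw [show x ^ (-2 : ℝ) = Real.exp (Real.log x * (-2)) from Real.rpow_def_of_pos hx0 _]
    apply Real.exp_le_exp.mpr
    nlinarith [hlogx]
  have h2 : ‖x ^ (-2 : ℝ)‖ = x ^ (-2 : ℝ) := Real.norm_of_nonneg (Real.rpow_nonneg hx0.le _)
  rw [Real.norm_of_nonneg (Real.exp_nonneg _), h2, one_mul]
  exact hkey

lemma stmt8_geom_summable {d : ℝ} (hd : 0 < d) :
    Summable fun m : ℕ => Real.exp (-(d * ((m : ℝ) + 1))) := by
  have h : ∀ m : ℕ, Real.exp (-(d * ((m : ℝ) + 1))) = Real.exp (-d) ^ (m + 1) := by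
    intro m
    rw [← Real.exp_nat_mul]
    congr 1
    push_cast
    ring
  simp_rw [h]
  exact (summable_geometric_of_lt_one (Real.exp_nonneg _)
    (Real.exp_lt_one_iff.mpr (by linarith))).comp_injective Nat.succ_injective

lemma stmt8_geom {d : ℝ} (hd : 0 < d) :
    ∑' m : ℕ, Real.exp (-(d * ((m : ℝ) + 1))) ≤ 1 / d := by
  have hr0 : (0:ℝ) ≤ Real.exp (-d) := Real.exp_nonneg _
  have hr1 : Real.exp (-d) < 1 := Real.exp_lt_one_iff.mpr (by linarith)
  have h : ∀ m : ℕ, Real.exp (-(d * ((m : ℝ) + 1))) = Real.exp (-d) * Real.exp (-d) ^ m := by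
    intro m
    rw [← Real.exp_nat_mul, ← Real.exp_add]
    congr 1
    push_cast
    ring
  calc ∑' m : ℕ, Real.exp (-(d * ((m : ℝ) + 1)))
      = Real.exp (-d) * ∑' m : ℕ, Real.exp (-d) ^ m := by
        simp_rw [h]; exact tsum_mul_left
    _ = Real.exp (-d) * (1 - Real.exp (-d))⁻¹ := by rw [tsum_geometric_of_lt_one hr0 hr1]
    _ ≤ 1 / d := by
        rw [Real.exp_neg]
        set E := Real.exp d with hE
        have hE1 : d + 1 ≤ E := Real.add_one_le_exp d
        have hE0 : (0 : ℝ) < E := Real.exp_pos d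
        have hEinv : (0 : ℝ) < E⁻¹ := by positivity
        have key : (d + 1) * E⁻¹ ≤ 1 := by
          calc (d + 1) * E⁻¹ ≤ E * E⁻¹ :=
                mul_le_mul_of_nonneg_right hE1 hEinv.le
            _ = 1 := mul_inv_cancel₀ hE0.ne'
        have expand : (d + 1) * E⁻¹ = d * E⁻¹ + E⁻¹ := by ring
        have h3 : d * E⁻¹ ≤ 1 - E⁻¹ := by linarith [expand ▸ key]
        have h30 : (0 : ℝ) < d * E⁻¹ := by positivity
        have h4 : (1 - E⁻¹)⁻¹ ≤ (d * E⁻¹)⁻¹ := by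
          apply inv_anti₀ h30 h3
        calc E⁻¹ * (1 - E⁻¹)⁻¹ ≤ E⁻¹ * (d * E⁻¹)⁻¹ :=
              mul_le_mul_of_nonneg_left h4 hEinv.le
          _ = 1 / d := by field_simp


section
variable {lam mu : ℝ} {a : ℕ → ℝ}

lemma stmt8_step (hlam : 0 < lam) (hmu0 : 0 < mu) (hmu1 : mu < 1)
    (ha : ∀ n : ℕ, a n = 1 / ((n : ℝ) + 1) ^ mu)
    {k : ℕ} (hk : mu * ((k : ℝ) + 2) ^ mu ≤ lam * ((k : ℝ) + 1)) :
    Real.exp (-(lam * a (k + 1))) * a k ≤ a (k + 1) := by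
  set p : ℝ := (k : ℝ) + 1 with hp
  set q : ℝ := (k : ℝ) + 2 with hq
  have hp0 : (0 : ℝ) < p := by positivity
  have hq0 : (0 : ℝ) < q := by positivity
  have hpmu : (0 : ℝ) < p ^ mu := Real.rpow_pos_of_pos hp0 mu
  have hqmu : (0 : ℝ) < q ^ mu := Real.rpow_pos_of_pos hq0 mu
  have hak : a k = 1 / p ^ mu := by rw [ha]
  have hak1 : a (k + 1) = 1 / q ^ mu := by
    rw [ha]; congr 2; push_cast; ring
  set t : ℝ := lam * (1 / q ^ mu) with ht
  have ht0 : 0 < t := by positivity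
  -- key: q^mu ≤ p^mu * exp t
  have hmain : q ^ mu ≤ p ^ mu * Real.exp t := by
    have hqp : q = p * (1 + 1 / p) := by
      rw [hq, hp]; field_simp; ring
    have h1 : q ^ mu = p ^ mu * (1 + 1 / p) ^ mu := by
      rw [hqp, Real.mul_rpow hp0.le (by positivity)]
    have h2 : (1 + 1 / p) ^ mu ≤ 1 + mu * (1 / p) :=
      rpow_one_add_le_one_add_mul_self (by nlinarith [one_div_pos.mpr hp0]) hmu0.le hmu1.le
    have h3 : 1 + mu * (1 / p) ≤ Real.exp (mu * (1 / p)) := by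
      linarith [Real.add_one_le_exp (mu * (1 / p))]
    have h4 : mu * (1 / p) ≤ t := by
      rw [ht]
      rw [mul_one_div, mul_one_div, div_le_div_iff₀ hp0 hqmu]
      calc mu * q ^ mu ≤ lam * p := hk
        _ = lam * p := rfl
    calc q ^ mu = p ^ mu * (1 + 1 / p) ^ mu := h1
      _ ≤ p ^ mu * (1 + mu * (1 / p)) := by
          apply mul_le_mul_of_nonneg_left h2 hpmu.le
      _ ≤ p ^ mu * Real.exp (mu * (1 / p)) := by
          apply mul_le_mul_of_nonneg_left h3 hpmu.le
      _ ≤ p ^ mu * Real.exp t := by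
          apply mul_le_mul_of_nonneg_left (Real.exp_le_exp.mpr h4) hpmu.le
  -- conclude
  rw [hak, hak1, mul_one_div, div_le_div_iff₀ hpmu hqmu, one_mul]
  have : Real.exp (-(lam * (1 / q ^ mu))) * q ^ mu
      ≤ Real.exp (-t) * (p ^ mu * Real.exp t) := by
    apply mul_le_mul_of_nonneg_left hmain (Real.exp_nonneg _)
  calc Real.exp (-(lam * (1 / q ^ mu))) * q ^ mu
      ≤ Real.exp (-t) * (p ^ mu * Real.exp t) := this
    _ = p ^ mu * (Real.exp (-t) * Real.exp t) := by ring
    _ = p ^ mu := by rw [← Real.exp_add, neg_add_cancel, Real.exp_zero, mul_one]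

lemma stmt8_mono (hlam : 0 < lam) (hmu0 : 0 < mu) (hmu1 : mu < 1)
    (ha : ∀ n : ℕ, a n = 1 / ((n : ℝ) + 1) ^ mu) (K : ℕ)
    (hK : ∀ k : ℕ, K ≤ k → mu * ((k : ℝ) + 2) ^ mu ≤ lam * ((k : ℝ) + 1)) :
    ∀ d k N : ℕ, k + d = N → K ≤ k →
      Real.exp (-lam * ∑ i ∈ Finset.Icc (k + 1) N, a i) * a k ≤ a N := by
  intro d
  induction d with
  | zero =>
      intro k N hkN _
      have hk : k = N := by omega
      subst hk
      rw [Finset.Icc_eq_empty (by omega), Finset.sum_empty, mul_zero, Real.exp_zero, one_mul]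
  | succ d ih =>
      intro k N hkN hKk
      have hk1N : k + 1 ≤ N := by omega
      have hsum : ∑ i ∈ Finset.Icc (k + 1) N, a i
          = a (k + 1) + ∑ i ∈ Finset.Icc (k + 2) N, a i := by
        rw [Finset.Icc_eq_cons_Ioc hk1N, Finset.sum_cons, ← Finset.Icc_add_one_left_eq_Ioc]; rfl
      have hstep := stmt8_step hlam hmu0 hmu1 ha (hK k hKk)
      calc Real.exp (-lam * ∑ i ∈ Finset.Icc (k + 1) N, a i) * a k
          = Real.exp (-lam * ∑ i ∈ Finset.Icc (k + 2) N, a i)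
              * (Real.exp (-(lam * a (k + 1))) * a k) := by
            rw [hsum, show -lam * (a (k + 1) + ∑ i ∈ Finset.Icc (k + 2) N, a i)
                = -lam * ∑ i ∈ Finset.Icc (k + 2) N, a i + -(lam * a (k + 1)) from by ring,
              Real.exp_add]
            ring
        _ ≤ Real.exp (-lam * ∑ i ∈ Finset.Icc (k + 2) N, a i) * a (k + 1) := by
            apply mul_le_mul_of_nonneg_left hstep (Real.exp_nonneg _)
        _ ≤ a N := ih (k + 1) N (by omega) (by omega)

end

set_option maxHeartbeats 1000000 in
/-- Let C > 0, λ > 0, μ ∈ (0,1), and a_n = 1/(n+1)^μ. For n > n₀ let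
β_n = max_{n₀ ≤ k ≤ n−1} [exp(−λ Σ_{i=k+1}^{n−1} a_i) a_k]. Then, as n₀ → ∞,
Σ_{n=n₀+1}^∞ exp(−C/β_n) = O(n₀^{1−μ} exp(−C (n₀−1)^μ)). -/

theorem stmt8 (C lam mu : ℝ) (hC : 0 < C) (hlam : 0 < lam)
    (hmu0 : 0 < mu) (hmu1 : mu < 1)
    (a : ℕ → ℝ) (ha : ∀ n : ℕ, a n = 1 / ((n : ℝ) + 1) ^ mu)
    (β : ℕ → ℕ → ℝ)
    (hβ : ∀ n₀ n : ℕ, n₀ < n →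
      IsGreatest
        ((fun k => Real.exp (-lam * ∑ i ∈ Finset.Icc (k + 1) (n - 1), a i) * a k) ''
          Set.Icc n₀ (n - 1)) (β n₀ n)) :
    (fun n₀ : ℕ => ∑' m : ℕ, Real.exp (-C / β n₀ (n₀ + 1 + m))) =O[atTop]
      (fun n₀ : ℕ => (n₀ : ℝ) ^ (1 - mu) * Real.exp (-C * ((n₀ : ℝ) - 1) ^ mu)) := by
  have h2mu : (0:ℝ) < (2:ℝ) ^ (mu - 1) := Real.rpow_pos_of_pos two_pos _
  set c : ℝ := C * mu * 2 ^ (mu - 1) with hc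
  have hc0 : 0 < c := by positivity
  set Kc : ℝ := ∑' m : ℕ, Real.exp (-(c * ((m:ℝ)+1) ^ mu)) with hKc
  have hKc0 : 0 ≤ Kc := tsum_nonneg fun m => Real.exp_nonneg _
  -- eventual inequality giving the monotonicity threshold K
  have hev : ∀ᶠ k : ℕ in atTop, mu * ((k:ℝ)+2) ^ mu ≤ lam * ((k:ℝ)+1) := by
    have ht0 : Tendsto (fun x : ℝ => x ^ (-(1 - mu))) atTop (nhds 0) :=
      tendsto_rpow_neg_atTop (by linarith)
    have htc : Tendsto (fun k : ℕ => ((k:ℝ) + 2)) atTop atTop :=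
      tendsto_atTop_add_const_right _ _ tendsto_natCast_atTop_atTop
    have ht : Tendsto (fun k : ℕ => ((k:ℝ)+2) ^ (mu - 1)) atTop (nhds 0) := by
      have hcomp := ht0.comp htc
      simpa [Function.comp_def, show -(1 - mu) = mu - 1 from by ring] using hcomp
    have hsm := ht.eventually (gt_mem_nhds (show (0:ℝ) < lam / (2 * mu) from by positivity))
    filter_upwards [hsm] with k hk
    have hk2 : (0:ℝ) < (k:ℝ) + 2 := by positivity
    have hrw : ((k:ℝ)+2) ^ mu = ((k:ℝ)+2) ^ (mu - 1) * ((k:ℝ)+2) := by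
      rw [← Real.rpow_add_one hk2.ne' (mu - 1)]; norm_num
    have hnn : (0:ℝ) ≤ ((k:ℝ)+2) ^ (mu-1) := Real.rpow_nonneg hk2.le _
    have hkc : (0:ℝ) ≤ (k:ℝ) := Nat.cast_nonneg k
    rw [hrw]
    have hk' : ((k:ℝ)+2) ^ (mu - 1) < lam / (2 * mu) := hk
    rw [lt_div_iff₀ (by positivity)] at hk'
    nlinarith [hk', hmu0, hkc, hnn]
  obtain ⟨K, hK⟩ := eventually_atTop.mp hev
  rw [isBigO_iff]
  refine ⟨1 / c + Kc, ?_⟩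
  filter_upwards [eventually_ge_atTop (max K 1)] with n₀ hn₀
  have hn₀K : K ≤ n₀ := le_trans (le_max_left _ _) hn₀
  have hn₀1 : 1 ≤ n₀ := le_trans (le_max_right _ _) hn₀
  set N : ℝ := (n₀ : ℝ) with hNdef
  have hN1 : (1:ℝ) ≤ N := by rw [hNdef]; exact_mod_cast hn₀1
  have hN0 : (0:ℝ) < N := by linarith
  set δ : ℝ := c * N ^ (mu - 1) with hδ
  have hδ0 : 0 < δ := by positivity
  -- Step 1: β is exactly controlled by its top element
  have step1 : ∀ m : ℕ, Real.exp (-C / β n₀ (n₀ + 1 + m))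
      ≤ Real.exp (-(C * (N + ((m:ℝ)+1)) ^ mu)) := by
    intro m
    have hlt : n₀ < n₀ + 1 + m := by omega
    have hg := hβ n₀ (n₀ + 1 + m) hlt
    have hn1 : n₀ + 1 + m - 1 = n₀ + m := by omega
    rw [hn1] at hg
    have hfa : (fun k => Real.exp (-lam * ∑ i ∈ Finset.Icc (k+1) (n₀+m), a i) * a k) (n₀+m)
        = a (n₀ + m) := by
      simp only
      rw [Finset.Icc_eq_empty (by omega), Finset.sum_empty, mul_zero, Real.exp_zero, one_mul]
    have hmem : a (n₀ + m) ∈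
        (fun k => Real.exp (-lam * ∑ i ∈ Finset.Icc (k+1) (n₀+m), a i) * a k) ''
          Set.Icc n₀ (n₀ + m) := ⟨n₀ + m, ⟨by omega, le_refl _⟩, hfa⟩
    have hβge : a (n₀ + m) ≤ β n₀ (n₀ + 1 + m) := hg.2 hmem
    have hβle : β n₀ (n₀ + 1 + m) ≤ a (n₀ + m) := by
      obtain ⟨k, hkmem, hfk⟩ := hg.1
      obtain ⟨hk1, hk2⟩ := hkmem
      rw [← hfk]
      exact stmt8_mono hlam hmu0 hmu1 ha K hK (n₀ + m - k) k (n₀ + m) (by omega)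
        (le_trans hn₀K hk1)
    have hapos : 0 < a (n₀ + m) := by rw [ha]; positivity
    have hβpos : 0 < β n₀ (n₀ + 1 + m) := lt_of_lt_of_le hapos hβge
    have hcast : ((n₀ + m : ℕ) : ℝ) + 1 = N + ((m:ℝ) + 1) := by push_cast; ring
    have hxpos : (0:ℝ) < (N + ((m:ℝ)+1)) ^ mu := by positivity
    have hβle' : β n₀ (n₀ + 1 + m) ≤ 1 / (N + ((m:ℝ)+1)) ^ mu := by
      rw [ha, hcast] at hβle; exact hβle
    have h1 : (N + ((m:ℝ)+1)) ^ mu ≤ 1 / β n₀ (n₀ + 1 + m) := by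
      have h2 := one_div_le_one_div_of_le hβpos hβle'
      rwa [one_div_one_div] at h2
    apply Real.exp_le_exp.mpr
    have h3 : C * (N + ((m:ℝ)+1)) ^ mu ≤ C / β n₀ (n₀ + 1 + m) := by
      rw [div_eq_mul_one_div]
      exact mul_le_mul_of_nonneg_left h1 hC.le
    have h4 : -C / β n₀ (n₀ + 1 + m) = -(C / β n₀ (n₀ + 1 + m)) := neg_div _ _
    linarith
  -- Step 2: pointwise bound by a summable majorant
  have step2 : ∀ m : ℕ, Real.exp (-(C * (N + ((m:ℝ)+1)) ^ mu))
      ≤ Real.exp (-(C * N ^ mu)) *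
        (Real.exp (-(δ * ((m:ℝ)+1))) + Real.exp (-(c * ((m:ℝ)+1) ^ mu))) := by
    intro m
    set j : ℝ := (m:ℝ) + 1 with hj
    have hj1 : (1:ℝ) ≤ j := by rw [hj]; linarith [Nat.cast_nonneg (α := ℝ) m]
    have hj0 : (0:ℝ) < j := by linarith
    have hgap := stmt8_gap hmu0.le hmu1.le hN0.le hj0
    have hNj0 : (0:ℝ) < N + j := by linarith
    have he1 : (0:ℝ) ≤ Real.exp (-(δ * j)) := Real.exp_nonneg _
    have he2 : (0:ℝ) ≤ Real.exp (-(c * j ^ mu)) := Real.exp_nonneg _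
    rcases le_total j N with hcase | hcase
    · have hb : (2 * N) ^ (mu - 1) ≤ (N + j) ^ (mu - 1) :=
        Real.rpow_le_rpow_of_nonpos hNj0 (by linarith) (by linarith)
      have hb2 : (2 * N) ^ (mu - 1) = 2 ^ (mu - 1) * N ^ (mu - 1) :=
        Real.mul_rpow (by norm_num) hN0.le
      have hkey : C * N ^ mu + δ * j ≤ C * (N + j) ^ mu := by
        have h5 : mu * (2 ^ (mu-1) * N ^ (mu-1)) * j ≤ mu * (N + j) ^ (mu - 1) * j := by
          apply mul_le_mul_of_nonneg_right _ hj0.le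
          apply mul_le_mul_of_nonneg_left _ hmu0.le
          rw [← hb2]; exact hb
        rw [hδ, hc]
        nlinarith [mul_le_mul_of_nonneg_left hgap hC.le,
          mul_le_mul_of_nonneg_left h5 hC.le]
      calc Real.exp (-(C * (N + j) ^ mu)) ≤ Real.exp (-(C * N ^ mu) + -(δ * j)) := by
            apply Real.exp_le_exp.mpr; linarith
        _ = Real.exp (-(C * N ^ mu)) * Real.exp (-(δ * j)) := Real.exp_add _ _
        _ ≤ _ := mul_le_mul_of_nonneg_left (le_add_of_nonneg_right he2)
            (Real.exp_nonneg _)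
    · have hb : (2 * j) ^ (mu - 1) ≤ (N + j) ^ (mu - 1) :=
        Real.rpow_le_rpow_of_nonpos hNj0 (by linarith) (by linarith)
      have hb2 : (2 * j) ^ (mu - 1) = 2 ^ (mu - 1) * j ^ (mu - 1) :=
        Real.mul_rpow (by norm_num) hj0.le
      have hjj : j ^ (mu - 1) * j = j ^ mu := by
        rw [← Real.rpow_add_one hj0.ne' (mu - 1)]; norm_num
      have hkey : C * N ^ mu + c * j ^ mu ≤ C * (N + j) ^ mu := by
        have h5 : mu * (2 ^ (mu-1) * j ^ (mu-1)) * j ≤ mu * (N + j) ^ (mu - 1) * j := by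
          apply mul_le_mul_of_nonneg_right _ hj0.le
          apply mul_le_mul_of_nonneg_left _ hmu0.le
          rw [← hb2]; exact hb
        have h6 : mu * (2 ^ (mu-1) * j ^ (mu-1)) * j = mu * 2 ^ (mu-1) * j ^ mu := by
          rw [← hjj]; ring
        rw [hc]
        nlinarith [mul_le_mul_of_nonneg_left hgap hC.le,
          mul_le_mul_of_nonneg_left h5 hC.le, h6]
      calc Real.exp (-(C * (N + j) ^ mu)) ≤ Real.exp (-(C * N ^ mu) + -(c * j ^ mu)) := by
            apply Real.exp_le_exp.mpr; linarith
        _ = Real.exp (-(C * N ^ mu)) * Real.exp (-(c * j ^ mu)) := Real.exp_add _ _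
        _ ≤ _ := mul_le_mul_of_nonneg_left (le_add_of_nonneg_left he1)
            (Real.exp_nonneg _)
  -- summability
  have hsumgeom : Summable fun m : ℕ => Real.exp (-(δ * ((m:ℝ)+1))) := stmt8_geom_summable hδ0
  have hsumc : Summable fun m : ℕ => Real.exp (-(c * ((m:ℝ)+1) ^ mu)) := stmt8_summable hc0 hmu0
  have hsumb : Summable fun m : ℕ => Real.exp (-(C * N ^ mu)) *
      (Real.exp (-(δ * ((m:ℝ)+1))) + Real.exp (-(c * ((m:ℝ)+1) ^ mu))) :=
    (hsumgeom.add hsumc).mul_left _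
  have hsumf : Summable fun m : ℕ => Real.exp (-C / β n₀ (n₀ + 1 + m)) :=
    Summable.of_nonneg_of_le (fun m => Real.exp_nonneg _)
      (fun m => (step1 m).trans (step2 m)) hsumb
  have htsum : (∑' m : ℕ, Real.exp (-C / β n₀ (n₀ + 1 + m)))
      ≤ Real.exp (-(C * N ^ mu)) * (1 / δ + Kc) := by
    calc (∑' m : ℕ, Real.exp (-C / β n₀ (n₀ + 1 + m)))
        ≤ ∑' m : ℕ, Real.exp (-(C * N ^ mu)) *
            (Real.exp (-(δ * ((m:ℝ)+1))) + Real.exp (-(c * ((m:ℝ)+1) ^ mu))) :=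
          Summable.tsum_le_tsum (fun m => (step1 m).trans (step2 m)) hsumf hsumb
      _ = Real.exp (-(C * N ^ mu)) *
            ((∑' m : ℕ, Real.exp (-(δ * ((m:ℝ)+1)))) + Kc) := by
          rw [tsum_mul_left, Summable.tsum_add hsumgeom hsumc]
      _ ≤ Real.exp (-(C * N ^ mu)) * (1 / δ + Kc) := by
          apply mul_le_mul_of_nonneg_left _ (Real.exp_nonneg _)
          have hg := stmt8_geom hδ0
          linarith
  have hNpow : (0:ℝ) < N ^ (1 - mu) := Real.rpow_pos_of_pos hN0 _
  have hinv : 1 / δ = (1 / c) * N ^ (1 - mu) := by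
    rw [hδ, show (mu - 1 : ℝ) = -(1 - mu) from by ring, Real.rpow_neg hN0.le]
    field_simp
  have hge1 : (1:ℝ) ≤ N ^ (1 - mu) := Real.one_le_rpow hN1 (by linarith)
  have hfinal1 : 1 / δ + Kc ≤ (1 / c + Kc) * N ^ (1 - mu) := by
    rw [hinv]
    have hKP : Kc ≤ Kc * N ^ (1 - mu) := le_mul_of_one_le_right hKc0 hge1
    have hexpand : (1 / c + Kc) * N ^ (1 - mu)
        = (1 / c) * N ^ (1 - mu) + Kc * N ^ (1 - mu) := by ring
    linarith
  have hexp : Real.exp (-(C * N ^ mu)) ≤ Real.exp (-C * (N - 1) ^ mu) := by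
    apply Real.exp_le_exp.mpr
    have h7 : (N - 1) ^ mu ≤ N ^ mu := Real.rpow_le_rpow (by linarith) (by linarith) hmu0.le
    nlinarith [mul_le_mul_of_nonneg_left h7 hC.le]
  rw [Real.norm_of_nonneg (tsum_nonneg fun m => Real.exp_nonneg _)]
  have hrhs0 : (0:ℝ) ≤ N ^ (1 - mu) * Real.exp (-C * (N - 1) ^ mu) := by positivity
  rw [Real.norm_of_nonneg hrhs0]
  calc (∑' m : ℕ, Real.exp (-C / β n₀ (n₀ + 1 + m)))
      ≤ Real.exp (-(C * N ^ mu)) * (1 / δ + Kc) := htsum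
    _ ≤ Real.exp (-(C * N ^ mu)) * ((1 / c + Kc) * N ^ (1 - mu)) :=
        mul_le_mul_of_nonneg_left hfinal1 (Real.exp_nonneg _)
    _ ≤ Real.exp (-C * (N - 1) ^ mu) * ((1 / c + Kc) * N ^ (1 - mu)) :=
        mul_le_mul_of_nonneg_right hexp (by positivity)
    _ = (1 / c + Kc) * (N ^ (1 - mu) * Real.exp (-C * (N - 1) ^ mu)) := by ring
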